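/- For every N ∈ ℕ* and h ∈ (0, 1), the weight Φ̃_{N,h} = Φ_r − N h ln(max(Φ_r/h, N)) is Lipschitz on [−(π−η), π−η] and satisfies: (i) on the set {Φ_r < N h} one has (Φ̃_{N,h}')² = (Φ_r')² = V almost everywhere; (ii) on the set {Φ_r ≥ N h} one has, almost everywhere, V − (Φ̃_{N,h}')² = V · (N h/Φ_r) · (2 − N h/Φ_r) ≥ N h · (V/Φ_r) ≥ N m h ≥ 0; (iii) consequently, with R = √(N/c₀), V − (Φ̃_{N,h}')² ≥ 0 almost everywhere on B and V − (Φ̃_{N,h}')² ≥ N m h almost everywhere on {s ∈ B : |s| ≥ R h^{1/2}}. (Proposition 2.4 (b), precised weight.) -/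

import Mathlib

set_option maxHeartbeats 1000000


open MeasureTheory Real

/-- Proposition 2.4 (b): the precised weight `Φ̃_{N,h} = Φ_r − Nh ln(max(Φ_r/h, N))`
is Lipschitz and satisfies: (i) on `{Φ_r < Nh}`, `(Φ̃')² = (Φ_r')² = V` a.e.;
(ii) on `{Φ_r ≥ Nh}`, a.e. `V − (Φ̃')² = V (Nh/Φ_r)(2 − Nh/Φ_r) ≥ Nh V/Φ_r ≥ Nmh ≥ 0`;
(iii) with `R = √(N/c₀)`, `V − (Φ̃')² ≥ 0` a.e. on `B` and `≥ Nmh` a.e. on `{|s| ≥ R√h}`. -/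
theorem stmt_8 (η : ℝ) (hη : η ∈ Set.Ioo 0 π)
    (B : Set ℝ) (hB : B = Set.Ioo (-(π - η)) (π - η))
    (V : ℝ → ℝ) (hVc : ContinuousOn V (Set.Icc (-(π - η)) (π - η)))
    (hV0 : ∀ s ∈ Set.Icc (-(π - η)) (π - η), 0 ≤ V s)
    (Φr : ℝ → ℝ) (hΦr : Φr = fun s => |∫ σ in (0:ℝ)..s, Real.sqrt (V σ)|)
    (heik : ∀ᵐ s ∂(volume.restrict B), (deriv Φr s) ^ 2 = V s)
    (c₀ : ℝ) (hc₀ : 0 < c₀)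
    (hVlow : ∀ s ∈ B, c₀ * s ^ 2 ≤ V s) (hΦlow : ∀ s ∈ B, c₀ * s ^ 2 ≤ Φr s)
    (m : ℝ) (hm : 0 < m) (hminf : ∀ s ∈ B, s ≠ 0 → m ≤ V s / Φr s)
    (N : ℕ) (hN : 1 ≤ N) (h : ℝ) (hh : h ∈ Set.Ioo (0:ℝ) 1)
    (Φt : ℝ → ℝ)
    (hΦt : Φt = fun s => Φr s - N * h * Real.log (max (Φr s / h) N)) :
    (∃ K : NNReal, LipschitzOnWith K Φt (Set.Icc (-(π - η)) (π - η))) ∧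
    (∀ᵐ s ∂(volume.restrict B), Φr s < N * h →
      (deriv Φt s) ^ 2 = (deriv Φr s) ^ 2 ∧ (deriv Φt s) ^ 2 = V s) ∧
    (∀ᵐ s ∂(volume.restrict B), N * h ≤ Φr s →
      V s - (deriv Φt s) ^ 2 = V s * (N * h / Φr s) * (2 - N * h / Φr s) ∧
      N * h * (V s / Φr s) ≤ V s - (deriv Φt s) ^ 2 ∧
      N * m * h ≤ V s - (deriv Φt s) ^ 2 ∧
      0 ≤ V s - (deriv Φt s) ^ 2) ∧
    ((∀ᵐ s ∂(volume.restrict B), 0 ≤ V s - (deriv Φt s) ^ 2) ∧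
     (∀ᵐ s ∂(volume.restrict B), Real.sqrt (N / c₀) * Real.sqrt h ≤ |s| →
       N * m * h ≤ V s - (deriv Φt s) ^ 2)) := by
  obtain ⟨hη0, hηπ⟩ := hη
  obtain ⟨hh0, hh1⟩ := hh
  set a : ℝ := π - η with ha
  have ha0 : 0 < a := by simp only [ha]; linarith
  have hN1 : (1:ℝ) ≤ (N:ℝ) := by exact_mod_cast hN
  have hN0 : (0:ℝ) < (N:ℝ) := by linarith
  have hNh : 0 < (N:ℝ) * h := by positivity
  set g : ℝ → ℝ := fun σ => Real.sqrt (V σ) with hg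
  have hgc : ContinuousOn g (Set.Icc (-a) a) := hVc.sqrt
  set F : ℝ → ℝ := fun s => ∫ σ in (0:ℝ)..s, Real.sqrt (V σ) with hF
  have hΦF : Φr = fun s => |F s| := hΦr
  have hsub : B ⊆ Set.Icc (-a) a := by rw [hB]; exact Set.Ioo_subset_Icc_self
  have hBopen : IsOpen B := by rw [hB]; exact isOpen_Ioo
  have h0mem : (0:ℝ) ∈ Set.Icc (-a) a := by constructor <;> linarith
  -- FTC : derivative of F on B
  have hFd : ∀ s ∈ B, HasDerivAt F (g s) s := by
    intro s hs
    have hsIcc := hsub hs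
    have hIcc : Set.Icc (-a) a ∈ nhds s :=
      Filter.mem_of_superset (hBopen.mem_nhds hs) hsub
    have hct : ContinuousAt g s := (hgc.continuousAt hIcc)
    have huIcc : Set.uIcc (0:ℝ) s ⊆ Set.Icc (-a) a := Set.uIcc_subset_Icc h0mem hsIcc
    have hint : IntervalIntegrable g volume 0 s :=
      (hgc.mono huIcc).intervalIntegrable
    have hmeas : StronglyMeasurableAtFilter g (nhds s) volume := by
      refine ContinuousOn.stronglyMeasurableAtFilter (s := Set.Ioo (-a) a) isOpen_Ioo
        (hgc.mono Set.Ioo_subset_Icc_self) s ?_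
      rwa [hB] at hs
    exact intervalIntegral.integral_hasDerivAt_right hint hmeas hct
  have hΦcont : ∀ s ∈ B, ContinuousAt Φr s := by
    intro s hs
    rw [hΦF]
    exact ((hFd s hs).continuousAt).abs
  have hVnn : ∀ s ∈ B, 0 ≤ V s := fun s hs => hV0 s (hsub hs)
  -- derivative of Φr at points where Φr ≠ 0
  have hΦd : ∀ s ∈ B, Φr s ≠ 0 → ∃ d, HasDerivAt Φr d s ∧ d ^ 2 = V s := by
    intro s hs hne
    have hF' := hFd s hs
    have hFs : F s ≠ 0 := by
      intro h0
      apply hne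
      rw [hΦF]; simp [h0]
    have hg2 : g s ^ 2 = V s := Real.sq_sqrt (hVnn s hs)
    rcases lt_or_gt_of_ne hFs with hneg | hpos
    · have hev : Φr =ᶠ[nhds s] fun u => -F u := by
        have hev' : ∀ᶠ u in nhds s, F u < 0 :=
          hF'.continuousAt.preimage_mem_nhds (Iio_mem_nhds hneg)
        filter_upwards [hev'] with u hu
        rw [hΦF]; exact abs_of_neg hu
      exact ⟨-g s, (hF'.neg).congr_of_eventuallyEq hev, by rw [neg_pow]; simpa using hg2⟩
    · have hev : Φr =ᶠ[nhds s] F := by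
        have hev' : ∀ᶠ u in nhds s, 0 < F u :=
          hF'.continuousAt.preimage_mem_nhds (Ioi_mem_nhds hpos)
        filter_upwards [hev'] with u hu
        rw [hΦF]; exact abs_of_pos hu
      exact ⟨g s, hF'.congr_of_eventuallyEq hev, hg2⟩
  have hΦr0 : Φr 0 = 0 := by
    rw [hΦF]
    simp only [hF, intervalIntegral.integral_same, abs_zero]
  -- the exceptional level set is countable hence null
  set E : Set ℝ := {s : ℝ | s ∈ B ∧ Φr s = N * h} with hE
  have hEdisc : DiscreteTopology E := by
    rw [discreteTopology_subtype_iff]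
    rintro s ⟨hsB, hsE⟩
    have hΦpos : Φr s ≠ 0 := by rw [hsE]; exact ne_of_gt hNh
    obtain ⟨d, hd, hd2⟩ := hΦd s hsB hΦpos
    have hs0 : s ≠ 0 := by intro h0; rw [h0, hΦr0] at hΦpos; exact hΦpos rfl
    have hVpos : 0 < V s := lt_of_lt_of_le (by positivity) (hVlow s hsB)
    have hdne : d ≠ 0 := by
      intro h0; rw [h0] at hd2; simp at hd2; rw [← hd2] at hVpos; exact lt_irrefl _ hVpos
    rw [Filter.inf_principal_eq_bot]
    have hslope := hasDerivAt_iff_tendsto_slope.mp hd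
    have hne := hslope.eventually_ne hdne
    filter_upwards [hne, self_mem_nhdsWithin] with u hu hune
    rintro ⟨_, huE⟩
    apply hu
    rw [slope_def_field, huE, hsE, sub_self, zero_div]
  have hEc : E.Countable := by
    haveI := hEdisc
    have : Countable E := TopologicalSpace.separableSpace_iff_countable.mp inferInstance
    exact Set.countable_coe_iff.mp this
  have hEnull : ∀ᵐ s ∂volume, s ∉ E := by
    have h0 : volume E = 0 := hEc.measure_zero _
    exact measure_eq_zero_iff_ae_notMem.mp h0
  -- the combined a.e. filter
  have hae : ∀ᵐ s ∂(volume.restrict B), s ∈ B ∧ s ∉ E ∧ (deriv Φr s) ^ 2 = V s := by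
    filter_upwards [ae_restrict_mem hBopen.measurableSet, ae_restrict_of_ae hEnull, heik]
      with s h1 h2 h3
    exact ⟨h1, h2, h3⟩
  -- key computation below Nh
  have key1 : ∀ s ∈ B, Φr s < N * h → deriv Φt s = deriv Φr s := by
    intro s hs hlt
    have hev : Φt =ᶠ[nhds s] fun u => Φr u - N * h * Real.log N := by
      have h2 : ∀ᶠ u in nhds s, Φr u < N * h :=
        (hΦcont s hs).preimage_mem_nhds (Iio_mem_nhds hlt)
      filter_upwards [h2] with u hu
      simp only [hΦt]
      have hmax : max (Φr u / h) (N:ℝ) = N := max_eq_right ((div_le_iff₀ hh0).mpr (by linarith))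
      rw [hmax]
    rw [hev.deriv_eq, deriv_sub_const]
  -- key computation above Nh
  have key2 : ∀ s ∈ B, N * h < Φr s →
      V s - (deriv Φt s) ^ 2 = V s * (N * h / Φr s) * (2 - N * h / Φr s) ∧
      N * h * (V s / Φr s) ≤ V s - (deriv Φt s) ^ 2 ∧
      N * m * h ≤ V s - (deriv Φt s) ^ 2 ∧
      0 ≤ V s - (deriv Φt s) ^ 2 := by
    intro s hs hgt
    have hP : 0 < Φr s := lt_trans hNh hgt
    obtain ⟨d, hd, hd2⟩ := hΦd s hs (ne_of_gt hP)
    have hs0 : s ≠ 0 := by intro h0; rw [h0, hΦr0] at hP; exact lt_irrefl _ hP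
    have hev : Φt =ᶠ[nhds s] fun u => Φr u - N * h * (Real.log (Φr u) - Real.log h) := by
      have h2 : ∀ᶠ u in nhds s, N * h < Φr u :=
        (hΦcont s hs).preimage_mem_nhds (Ioi_mem_nhds hgt)
      filter_upwards [h2] with u hu
      have hu0 : 0 < Φr u := lt_trans hNh hu
      simp only [hΦt]
      have hmax : max (Φr u / h) (N:ℝ) = Φr u / h :=
        max_eq_left (le_of_lt ((lt_div_iff₀ hh0).mpr (by linarith)))
      rw [hmax, Real.log_div (ne_of_gt hu0) (ne_of_gt hh0)]
    have hdΦt : HasDerivAt Φt (d - N * h * (d / Φr s)) s := by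
      have hlog : HasDerivAt (fun u => Real.log (Φr u)) (d / Φr s) s :=
        hd.log (ne_of_gt hP)
      have : HasDerivAt (fun u => Φr u - N * h * (Real.log (Φr u) - Real.log h))
          (d - N * h * (d / Φr s)) s := by
        have h1 := (hlog.sub_const (Real.log h)).const_mul ((N:ℝ) * h)
        exact hd.sub h1
      exact this.congr_of_eventuallyEq hev
    have hderiv : deriv Φt s = d * (1 - N * h / Φr s) := by
      rw [hdΦt.deriv]; field_simp
    have ht0 : 0 < N * h / Φr s := div_pos hNh hP
    have ht1 : N * h / Φr s < 1 := (div_lt_one hP).mpr hgt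
    have heq : V s - (deriv Φt s) ^ 2 =
        V s * (N * h / Φr s) * (2 - N * h / Φr s) := by
      rw [hderiv]
      linear_combination (-(1 - N * h / Φr s) ^ 2) * hd2
    have hVP : m ≤ V s / Φr s := hminf s hs hs0
    have hVs0 : 0 ≤ V s := hVnn s hs
    have h2 : N * h * (V s / Φr s) = V s * (N * h / Φr s) := by
      field_simp
    have base : 0 ≤ V s * (N * h / Φr s) * (1 - N * h / Φr s) :=
      mul_nonneg (mul_nonneg hVs0 ht0.le) (by linarith)
    have step1 : N * h * (V s / Φr s) ≤ V s - (deriv Φt s) ^ 2 := by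
      rw [heq, h2]; nlinarith [base]
    have step2 : N * m * h ≤ V s - (deriv Φt s) ^ 2 := by
      have hc : (N:ℝ) * h * m ≤ N * h * (V s / Φr s) :=
        mul_le_mul_of_nonneg_left hVP hNh.le
      have hcomm : (N:ℝ) * m * h = N * h * m := by ring
      linarith
    have step3 : 0 ≤ V s - (deriv Φt s) ^ 2 := by
      have : (0:ℝ) ≤ N * m * h := by positivity
      linarith
    exact ⟨heq, step1, step2, step3⟩
  -- Lipschitz bound
  have hlip : ∃ K : NNReal, LipschitzOnWith K Φt (Set.Icc (-a) a) := by
    obtain ⟨M, hM⟩ := isCompact_Icc.exists_bound_of_continuousOn hgc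
    have hM0 : 0 ≤ M := le_trans (norm_nonneg _) (hM 0 h0mem)
    have hFlip : ∀ x ∈ Set.Icc (-a) a, ∀ y ∈ Set.Icc (-a) a,
        |F x - F y| ≤ M * |x - y| := by
      intro x hx y hy
      have hix : IntervalIntegrable g volume 0 x :=
        (hgc.mono (Set.uIcc_subset_Icc h0mem hx)).intervalIntegrable
      have hiy : IntervalIntegrable g volume 0 y :=
        (hgc.mono (Set.uIcc_subset_Icc h0mem hy)).intervalIntegrable
      have hsub2 : F x - F y = ∫ σ in y..x, g σ := by
        rw [hF]
        exact (intervalIntegral.integral_interval_sub_left hix hiy)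
      rw [hsub2, ← Real.norm_eq_abs]
      apply intervalIntegral.norm_integral_le_of_norm_le_const
      intro u hu
      have : u ∈ Set.Icc (-a) a := Set.uIcc_subset_Icc hy hx (Set.uIoc_subset_uIcc hu)
      exact hM u this
    have hΦlip : ∀ x ∈ Set.Icc (-a) a, ∀ y ∈ Set.Icc (-a) a,
        |Φr x - Φr y| ≤ M * |x - y| := by
      intro x hx y hy
      rw [hΦF]
      exact le_trans (abs_abs_sub_abs_le_abs_sub _ _) (hFlip x hx y hy)
    have hlog : ∀ A B' : ℝ, (N:ℝ) ≤ A → (N:ℝ) ≤ B' →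
        |Real.log A - Real.log B'| ≤ |A - B'| / N := by
      have main : ∀ A B' : ℝ, (N:ℝ) ≤ A → (N:ℝ) ≤ B' → A ≤ B' →
          Real.log B' - Real.log A ≤ (B' - A) / N := by
        intro A B' hA hB hAB
        have hA0 : 0 < A := lt_of_lt_of_le hN0 hA
        have hB0 : 0 < B' := lt_of_lt_of_le hN0 hB
        have h1 : Real.log B' - Real.log A = Real.log (B' / A) := by
          rw [Real.log_div (ne_of_gt hB0) (ne_of_gt hA0)]
        rw [h1]
        have h2 : Real.log (B' / A) ≤ B' / A - 1 :=
          Real.log_le_sub_one_of_pos (div_pos hB0 hA0)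
        have h3 : B' / A - 1 = (B' - A) / A := by field_simp
        have h4 : (B' - A) / A ≤ (B' - A) / N :=
          div_le_div_of_nonneg_left (by linarith) hN0 hA
        linarith
      intro A B' hA hB
      rcases le_total A B' with hle | hle
      · have := main A B' hA hB hle
        have hlog_le : Real.log A ≤ Real.log B' :=
          Real.log_le_log (lt_of_lt_of_le hN0 hA) hle
        rw [abs_of_nonpos (by linarith : Real.log A - Real.log B' ≤ 0),
          abs_of_nonpos (by linarith : A - B' ≤ 0)]
        have : -(A - B') / ↑N = (B' - A) / ↑N := by ring
        linarith [this]
      · have := main B' A hB hA hle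
        have hlog_le : Real.log B' ≤ Real.log A :=
          Real.log_le_log (lt_of_lt_of_le hN0 hB) hle
        rw [abs_of_nonneg (by linarith), abs_of_nonneg (by linarith)]
        linarith
    refine ⟨Real.toNNReal (2 * M), ?_⟩
    rw [lipschitzOnWith_iff_dist_le_mul]
    intro x hx y hy
    rw [Real.dist_eq, Real.dist_eq]
    have hcoe : ((Real.toNNReal (2 * M) : NNReal) : ℝ) = 2 * M :=
      Real.coe_toNNReal _ (by positivity)
    rw [hcoe]
    have hNx : (N:ℝ) ≤ max (Φr x / h) N := le_max_right _ _
    have hNy : (N:ℝ) ≤ max (Φr y / h) N := le_max_right _ _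
    have hmaxb : |max (Φr x / h) (N:ℝ) - max (Φr y / h) (N:ℝ)| ≤ |Φr x - Φr y| / h := by
      have := abs_max_sub_max_le_abs (Φr x / h) (Φr y / h) (N:ℝ)
      have h2 : |Φr x / h - Φr y / h| = |Φr x - Φr y| / h := by
        rw [div_sub_div_same, abs_div, abs_of_pos hh0]
      linarith
    have hlogb : |Real.log (max (Φr x / h) N) - Real.log (max (Φr y / h) N)| ≤
        (|Φr x - Φr y| / h) / N :=
      le_trans (hlog _ _ hNx hNy) (by gcongr)
    have hΦxy := hΦlip x hx y hy
    simp only [hΦt]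
    have expand : (Φr x - N * h * Real.log (max (Φr x / h) N)) -
        (Φr y - N * h * Real.log (max (Φr y / h) N)) =
        (Φr x - Φr y) - N * h * (Real.log (max (Φr x / h) N) - Real.log (max (Φr y / h) N)) := by
      ring
    calc |(Φr x - N * h * Real.log (max (Φr x / h) N)) -
        (Φr y - N * h * Real.log (max (Φr y / h) N))|
        ≤ |Φr x - Φr y| + (N * h) *
          |Real.log (max (Φr x / h) N) - Real.log (max (Φr y / h) N)| := by
          rw [expand]
          refine le_trans (abs_sub _ _) ?_
          rw [abs_mul, abs_of_pos hNh]
      _ ≤ |Φr x - Φr y| + (N * h) * ((|Φr x - Φr y| / h) / N) := by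
          have := mul_le_mul_of_nonneg_left hlogb hNh.le
          linarith
      _ = 2 * |Φr x - Φr y| := by field_simp; ring
      _ ≤ 2 * (M * |x - y|) := by linarith [abs_nonneg (Φr x - Φr y)]
      _ = 2 * M * |x - y| := by ring
  refine ⟨hlip, ?_, ?_, ?_, ?_⟩
  · -- (i)
    filter_upwards [hae] with s hs hlt
    obtain ⟨hsB, _, hV⟩ := hs
    rw [key1 s hsB hlt]
    exact ⟨rfl, hV⟩
  · -- (ii)
    filter_upwards [hae] with s hs hge
    obtain ⟨hsB, hsE, _⟩ := hs
    have hgt : N * h < Φr s := lt_of_le_of_ne hge (fun heq => hsE ⟨hsB, heq.symm⟩)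
    exact key2 s hsB hgt
  · -- (iii) first
    filter_upwards [hae] with s hs
    obtain ⟨hsB, hsE, hV⟩ := hs
    rcases lt_or_ge (Φr s) (N * h) with hlt | hge
    · rw [key1 s hsB hlt, hV]; simp
    · have hgt : N * h < Φr s := lt_of_le_of_ne hge (fun heq => hsE ⟨hsB, heq.symm⟩)
      obtain ⟨_, _, _, h4⟩ := key2 s hsB hgt
      exact h4
  · -- (iii) second
    filter_upwards [hae] with s hs habs
    obtain ⟨hsB, hsE, _⟩ := hs
    have hr2 : (Real.sqrt (N / c₀) * Real.sqrt h) ^ 2 = (N / c₀) * h := by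
      rw [mul_pow, Real.sq_sqrt (by positivity), Real.sq_sqrt hh0.le]
    have hs2 : (N / c₀) * h ≤ s ^ 2 := by
      have h1 : (Real.sqrt (N / c₀) * Real.sqrt h) ^ 2 ≤ |s| ^ 2 := by
        apply pow_le_pow_left₀ (by positivity) habs
      rw [hr2, sq_abs] at h1
      exact h1
    have hge : N * h ≤ Φr s := by
      have h1 : N * h ≤ c₀ * s ^ 2 := by
        have := mul_le_mul_of_nonneg_left hs2 hc₀.le
        calc (N:ℝ) * h = c₀ * ((N / c₀) * h) := by field_simp
          _ ≤ c₀ * s ^ 2 := this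
      exact le_trans h1 (hΦlow s hsB)
    have hgt : N * h < Φr s := lt_of_le_of_ne hge (fun heq => hsE ⟨hsB, heq.symm⟩)
    obtain ⟨_, _, h3, _⟩ := key2 s hsB hgt
    exact h3
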